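/- The egalitarian rule violates weak monotonicity: there exists a line-up election (S,C,P), a winning line-up π under the egalitarian rule, and a score increase of score_p(π_p) for some position p, such that π is no longer winning after the increase. -/

import Mathlib

open Function

section Defs

variable {C P : Type*}

/-- Utilitarian (summed) score of a line-up. -/
def utilScore [Fintype P] (S : C → P → ℚ) (π : P → C) : ℚ := ∑ p, S (π p) p

/-- Winner under the utilitarian rule. -/
def IsUtilWinner [Fintype P] (S : C → P → ℚ) (π : P → C) : Prop :=
  Function.Injective π ∧
    ∀ π' : P → C, Function.Injective π' → utilScore S π' ≤ utilScore S π

/-- Egalitarian (minimum) score of a line-up. -/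
def egalScore [Fintype P] [Nonempty P] (S : C → P → ℚ) (π : P → C) : ℚ :=
  Finset.univ.inf' Finset.univ_nonempty (fun p => S (π p) p)

/-- Winner under the egalitarian rule. -/
def IsEgalWinner [Fintype P] [Nonempty P] (S : C → P → ℚ) (π : P → C) : Prop :=
  Function.Injective π ∧
    ∀ π' : P → C, Function.Injective π' → egalScore S π' ≤ egalScore S π

/-- Outcome of the sequential rule that fills positions in increasing order of the
priority `r`: each position receives a best candidate among those not assigned to
an earlier position. -/
def FixedOrderOutcome (r : P → ℕ) (S : C → P → ℚ) (π : P → C) : Prop :=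
  Function.Injective π ∧
    ∀ p : P, ∀ c : C, (∀ p' : P, r p' < r p → c ≠ π p') → S c p ≤ S (π p) p

/-- Outcome of some sequential rule: positions are filled one at a time in some order,
each receiving a best remaining candidate. -/
def SeqOutcome (S : C → P → ℚ) (π : P → C) : Prop :=
  ∃ r : P → ℕ, Function.Injective r ∧ FixedOrderOutcome r S π

/-- Outcome of the max-first rule along the order `r`: at each step the assigned
candidate-position pair has maximal score among all remaining pairs. -/
def MaxFirstOrder (r : P → ℕ) (S : C → P → ℚ) (π : P → C) : Prop :=
  Function.Injective π ∧
    ∀ p p'' : P, r p ≤ r p'' → ∀ c : C,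
      (∀ p' : P, r p' < r p → c ≠ π p') → S c p'' ≤ S (π p) p

/-- Outcome of the max-first sequential rule. -/
def MaxFirstOutcome (S : C → P → ℚ) (π : P → C) : Prop :=
  ∃ r : P → ℕ, Function.Injective r ∧ MaxFirstOrder r S π

/-- Outcome of the min-first rule along the order `r`: at each step the filled
position is one whose best remaining candidate score is smallest among the remaining
positions, and it receives a best remaining candidate. -/
def MinFirstOrder (r : P → ℕ) (S : C → P → ℚ) (π : P → C) : Prop :=
  Function.Injective π ∧
    (∀ p : P, ∀ c : C, (∀ p' : P, r p' < r p → c ≠ π p') → S c p ≤ S (π p) p) ∧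
    (∀ p p'' : P, r p ≤ r p'' →
      ∃ c : C, (∀ p' : P, r p' < r p → c ≠ π p') ∧ S (π p) p ≤ S c p'')

/-- Outcome of the min-first sequential rule. -/
def MinFirstOutcome (S : C → P → ℚ) (π : P → C) : Prop :=
  ∃ r : P → ℕ, Function.Injective r ∧ MinFirstOrder r S π

/-- A line-up is reasonably satisfying if (i) there are no two positions `p, p'` with
`score_p(π_{p'}) > score_p(π_p)` and `score_p(π_{p'}) > score_{p'}(π_{p'})`, and
(ii) no unassigned candidate scores higher on some position than its occupant. -/
def ReasonablySatisfying (S : C → P → ℚ) (π : P → C) : Prop :=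
  (¬ ∃ p p' : P, S (π p') p > S (π p) p ∧ S (π p') p > S (π p') p') ∧
  (¬ ∃ (c : C) (p : P), c ∉ Set.range π ∧ S c p > S (π p) p)

/-- A line-up is score Pareto optimal if no line-up is at least as good on every
position and strictly better on some position. -/
def ScoreParetoOptimal (S : C → P → ℚ) (π : P → C) : Prop :=
  ¬ ∃ π' : P → C, Function.Injective π' ∧
      (∀ p : P, S (π p) p ≤ S (π' p) p) ∧ (∃ p : P, S (π p) p < S (π' p) p)

/-- The entries of `v` sorted in decreasing order; `sortedDesc v i` is the
`(i+1)`-st largest entry of `v`. -/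
def sortedDesc {n : ℕ} (v : Fin n → ℚ) : Fin n → ℚ :=
  v ∘ (Tuple.sort (fun i => -v i))

/-- Ordered weighted average of `v` with OWA-vector `Λ`. -/
def owa {n : ℕ} (Λ : Fin n → ℚ) (v : Fin n → ℚ) : ℚ :=
  ∑ i, Λ i * sortedDesc v i

/-- The score vector of a line-up. -/
def scoreVec {q : ℕ} (S : C → Fin q → ℚ) (π : Fin q → C) : Fin q → ℚ :=
  fun p => S (π p) p

/-- Winner under the OWA-rule `f^Λ`. -/
def IsOWAWinner {q : ℕ} (Λ : Fin q → ℚ) (S : C → Fin q → ℚ) (π : Fin q → C) : Prop :=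
  Function.Injective π ∧
    ∀ π' : Fin q → C, Function.Injective π' →
      owa Λ (scoreVec S π') ≤ owa Λ (scoreVec S π)

end Defs

/-- The egalitarian rule violates weak monotonicity. -/
theorem stmt6 : ∃ (S S' : Fin 3 → Fin 2 → ℚ) (π : Fin 2 → Fin 3) (p0 : Fin 2),
    IsEgalWinner S π ∧ S (π p0) p0 < S' (π p0) p0 ∧
    (∀ (c : Fin 3) (p : Fin 2), (c, p) ≠ (π p0, p0) → S' c p = S c p) ∧
    ¬ IsEgalWinner S' π := by
  refine ⟨![![0,3],![3,0],![4,0]], ![![0,4],![3,0],![4,0]], ![1,0], 1, ?_, ?_, ?_, ?_⟩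
  · refine ⟨by decide, fun π' h => ?_⟩
    have h1 : egalScore ![![0,3],![3,0],![4,0]] π' ≤ ![![0,3],![3,0],![4,0]] (π' 1) 1 :=
      Finset.inf'_le _ (Finset.mem_univ 1)
    have h2 : (![![0,3],![3,0],![4,0]] (π' 1) 1 : ℚ) ≤ 3 := by
      obtain ⟨x, hx⟩ : ∃ x, π' 1 = x := ⟨_, rfl⟩
      rw [hx]; fin_cases x <;> norm_num
    have h3 : egalScore ![![0,3],![3,0],![4,0]] ![1,0] = 3 := by
      simp only [egalScore, show (Finset.univ : Finset (Fin 2)) = {0, 1} from rfl]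
      norm_num [Finset.inf'_insert]
    rw [h3]; exact h1.trans h2
  · decide
  · decide
  · rintro ⟨-, h⟩
    have := h ![2, 0] (by decide)
    simp only [egalScore, show (Finset.univ : Finset (Fin 2)) = {0, 1} from rfl] at this
    norm_num [Finset.inf'_insert, Matrix.cons_val_two] at this
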